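/- For every β > 0 and every τ ∈ (0, (1+√5)/2), the matrix M := blkdiag(0_{n₁×n₁}, βC + βBᵀB, (τβ)^{-1} I_{n₁}) + s_τ β · [[AᵀA, AᵀB, 0], [BᵀA, BᵀB, 0], [0, 0, 0]] is positive definite, where s_τ := (5 − τ − 3·min{τ, τ^{-1}})/4. -/

import Mathlib

open Matrix

/-- Row index type of the big matrices: `n₁ = m(1 + ∑_t m_t)` coordinates. -/
abbrev RowIdx (N m : ℕ) (mt : Fin N → ℕ) :=
  Fin m ⊕ (Σ t : Fin N, Fin (mt t) × Fin m)

/-- Column index type: `n₂ = mN + ∑_t m_t` coordinates. -/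
abbrev ColIdx (N m : ℕ) (mt : Fin N → ℕ) :=
  (Fin N × Fin m) ⊕ (Σ t : Fin N, Fin (mt t))

/-- `A = blkdiag(−I_m, I_{m ∑_t m_t})`. -/
noncomputable def matA (N m : ℕ) (mt : Fin N → ℕ) :
    Matrix (RowIdx N m mt) (RowIdx N m mt) ℝ :=
  Matrix.fromBlocks (-1) 0 0 1

/-- `B₁ = K₁ ⊗ I_m`, where `K₁` has first row all ones and, in block `t`,
`m_t` rows with entry `−1` in column `t`. -/
noncomputable def matB₁ (N m : ℕ) (mt : Fin N → ℕ) :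
    Matrix (RowIdx N m mt) (Fin N × Fin m) ℝ :=
  Matrix.of fun r c =>
    match r with
    | Sum.inl i => if i = c.2 then 1 else 0
    | Sum.inr ⟨t, (_, i)⟩ => if t = c.1 ∧ i = c.2 then -1 else 0

/-- `B₂ = K₂ ⊗ e_m`, where `K₂` has first row zero and remaining rows
`−I_{∑_t m_t}`. -/
noncomputable def matB₂ (N m : ℕ) (mt : Fin N → ℕ) :
    Matrix (RowIdx N m mt) (Σ t : Fin N, Fin (mt t)) ℝ :=
  Matrix.of fun r c =>
    match r with
    | Sum.inl _ => 0
    | Sum.inr ⟨t, (j, _)⟩ => if (⟨t, j⟩ : Σ t : Fin N, Fin (mt t)) = c then -1 else 0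

/-- `B = [B₁ B₂]`. -/
noncomputable def matB (N m : ℕ) (mt : Fin N → ℕ) :
    Matrix (RowIdx N m mt) (ColIdx N m mt) ℝ :=
  Matrix.fromCols (matB₁ N m mt) (matB₂ N m mt)

/-- `C = [[B₁ᵀB₂(B₂ᵀB₂)⁻¹B₂ᵀB₁, 0], [0, 0]]`. -/
noncomputable def matC (N m : ℕ) (mt : Fin N → ℕ) :
    Matrix (ColIdx N m mt) (ColIdx N m mt) ℝ :=
  Matrix.fromBlocks
    ((matB₁ N m mt)ᵀ * matB₂ N m mt * ((matB₂ N m mt)ᵀ * matB₂ N m mt)⁻¹ *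
      ((matB₂ N m mt)ᵀ * matB₁ N m mt)) 0 0 0

/-- `s_τ = (5 − τ − 3 min{τ, τ⁻¹})/4`. -/
noncomputable def sTau (τ : ℝ) : ℝ := (5 - τ - 3 * min τ τ⁻¹) / 4

/-- `M = blkdiag(0, βC + βBᵀB, (τβ)⁻¹ I) + s_τ β [[AᵀA, AᵀB, 0], [BᵀA, BᵀB, 0], [0,0,0]]`,
with blocks of sizes `n₁`, `n₂`, `n₁`. -/
noncomputable def matM (N m : ℕ) (mt : Fin N → ℕ) (β τ : ℝ) :
    Matrix (RowIdx N m mt ⊕ (ColIdx N m mt ⊕ RowIdx N m mt))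
      (RowIdx N m mt ⊕ (ColIdx N m mt ⊕ RowIdx N m mt)) ℝ :=
  Matrix.fromBlocks
    ((sTau τ * β) • ((matA N m mt)ᵀ * matA N m mt))
    (Matrix.fromCols ((sTau τ * β) • ((matA N m mt)ᵀ * matB N m mt)) 0)
    (Matrix.fromRows ((sTau τ * β) • ((matB N m mt)ᵀ * matA N m mt)) 0)
    (Matrix.fromBlocks
      (β • matC N m mt + β • ((matB N m mt)ᵀ * matB N m mt) +
        (sTau τ * β) • ((matB N m mt)ᵀ * matB N m mt))
      0 0 ((τ * β)⁻¹ • 1))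


section Aux

/-- Self dot product is nonneg. -/
private lemma dp_self_nonneg {n : Type*} [Fintype n] (v : n → ℝ) : 0 ≤ v ⬝ᵥ v :=
  Finset.sum_nonneg fun i _ => mul_self_nonneg _

private lemma dot_gram {k n n' : Type*} [Fintype k] [Fintype n] [Fintype n']
    (M : Matrix k n ℝ) (P : Matrix k n' ℝ) (a : n → ℝ) (b : n' → ℝ) :
    a ⬝ᵥ (Mᵀ * P) *ᵥ b = (M *ᵥ a) ⬝ᵥ (P *ᵥ b) := by
  rw [← Matrix.mulVec_mulVec, Matrix.dotProduct_mulVec, Matrix.vecMul_transpose]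

private lemma factor_zero {c T : ℝ} (hc : 0 < c) (hT : 0 ≤ T) (h : c * T ≤ 0) : T = 0 := by
  refine le_antisymm ?_ hT
  have h2 : c * T ≤ c * 0 := by linarith
  exact le_of_mul_le_mul_left h2 hc

private lemma sum_elim_add_sum_elim {n n' : Type*} (a c : n → ℝ) (b d : n' → ℝ) :
    Sum.elim a b + Sum.elim c d = Sum.elim (a + c) (b + d) := by
  funext i; rcases i with i | i <;> simp

lemma sTau_pos (τ : ℝ) (h1 : 0 < τ) (h2 : τ < (1 + Real.sqrt 5) / 2) : 0 < sTau τ := by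
  unfold sTau
  rcases le_total τ 1 with h | h
  · rw [min_eq_left (le_trans h ((one_le_inv₀ h1).mpr h))]
    linarith
  · rw [min_eq_right (le_trans (inv_le_one_of_one_le₀ h) h)]
    have h5 : Real.sqrt 5 ^ 2 = 5 := Real.sq_sqrt (by norm_num)
    have key : 0 < 5 * τ - τ ^ 2 - 3 := by nlinarith [Real.sqrt_nonneg 5]
    have hinv : τ * τ⁻¹ = 1 := mul_inv_cancel₀ (ne_of_gt h1)
    nlinarith [key, hinv, h1]

lemma matA_gram (N m : ℕ) (mt : Fin N → ℕ) : (matA N m mt)ᵀ * matA N m mt = 1 := by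
  simp [matA, Matrix.fromBlocks_transpose, Matrix.fromBlocks_multiply, ← Matrix.fromBlocks_one]

lemma matB₂_gram (N m : ℕ) (mt : Fin N → ℕ) :
    (matB₂ N m mt)ᵀ * matB₂ N m mt = (m : ℝ) • 1 := by
  ext c c'
  simp only [Matrix.mul_apply, Matrix.transpose_apply, matB₂, Matrix.of_apply,
    Fintype.sum_sum_type]
  simp only [zero_mul, Finset.sum_const_zero, zero_add]
  rw [Fintype.sum_equiv
    (⟨fun x => (⟨x.1, x.2.1⟩, x.2.2), fun y => ⟨y.1.1, (y.1.2, y.2)⟩,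
      fun x => rfl, fun y => rfl⟩ :
      (Σ t : Fin N, Fin (mt t) × Fin m) ≃ (Σ t : Fin N, Fin (mt t)) × Fin m)
    (fun x : Σ t : Fin N, Fin (mt t) × Fin m =>
      (if (⟨x.1, x.2.1⟩ : Σ t : Fin N, Fin (mt t)) = c then (-1:ℝ) else 0) *
        (if (⟨x.1, x.2.1⟩ : Σ t : Fin N, Fin (mt t)) = c' then -1 else 0))
    (fun y => (if y.1 = c then (-1:ℝ) else 0) * (if y.1 = c' then -1 else 0))
    (fun x => rfl)]
  rw [Fintype.sum_prod_type]
  have h1 : ∀ p : Σ t : Fin N, Fin (mt t),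
      (∑ _i : Fin m, (if p = c then (-1:ℝ) else 0) * (if p = c' then -1 else 0))
        = if p = c then (if c = c' then (m:ℝ) else 0) else 0 := by
    intro p
    rcases eq_or_ne p c with rfl | hp
    · rcases eq_or_ne p c' with rfl | hq
      · simp [Finset.sum_const, nsmul_eq_mul]
      · simp [hq]
    · simp [hp]
  rw [Finset.sum_congr rfl fun p _ => h1 p, Finset.sum_ite_eq']
  rcases eq_or_ne c c' with rfl | hne
  · simp
  · simp [Matrix.one_apply_ne hne, hne]

lemma matB₂_gram_inv (N m : ℕ) (mt : Fin N → ℕ) (hm : 0 < m) :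
    ((matB₂ N m mt)ᵀ * matB₂ N m mt)⁻¹ = (m : ℝ)⁻¹ • 1 := by
  apply Matrix.inv_eq_right_inv
  rw [matB₂_gram, smul_mul_assoc, mul_smul_comm, smul_smul, one_mul,
    mul_inv_cancel₀ (Nat.cast_ne_zero.mpr hm.ne'), one_smul]

lemma matC_eq (N m : ℕ) (mt : Fin N → ℕ) (hm : 0 < m) :
    matC N m mt = Matrix.fromBlocks
      ((m : ℝ)⁻¹ • (((matB₂ N m mt)ᵀ * matB₁ N m mt)ᵀ * ((matB₂ N m mt)ᵀ * matB₁ N m mt)))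
      0 0 0 := by
  unfold matC
  rw [matB₂_gram_inv N m mt hm]
  congr 1
  rw [Matrix.transpose_mul, Matrix.transpose_transpose, Matrix.mul_smul, Matrix.mul_one,
    Matrix.smul_mul]

lemma matB₁_inj (N m : ℕ) (mt : Fin N → ℕ) (hmt : ∀ t, 0 < mt t)
    (u : Fin N × Fin m → ℝ) (h : matB₁ N m mt *ᵥ u = 0) : u = 0 := by
  funext c
  have key := congrFun h (Sum.inr ⟨c.1, (⟨0, hmt c.1⟩, c.2)⟩)
  simp only [Matrix.mulVec, dotProduct, matB₁, Matrix.of_apply, Pi.zero_apply] at key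
  have h2 : ∀ c' : Fin N × Fin m,
      (if c.1 = c'.1 ∧ c.2 = c'.2 then (-1:ℝ) else 0) * u c'
        = if c = c' then -u c' else 0 := by
    intro c'
    rcases eq_or_ne c c' with rfl | hcc
    · simp
    · rw [if_neg hcc, if_neg (fun hand => hcc (Prod.ext hand.1 hand.2)), zero_mul]
  rw [Finset.sum_congr rfl fun c' _ => h2 c', Finset.sum_ite_eq] at key
  simpa using key

end Aux

/-- for every `β > 0` and `τ ∈ (0, (1+√5)/2)`, the matrix `M` is
positive definite. -/
theorem stmt_12 (N m : ℕ) (hN : 0 < N) (hm : 0 < m)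
    (mt : Fin N → ℕ) (hmt : ∀ t, 0 < mt t)
    (β τ : ℝ) (hβ : 0 < β) (hτ : 0 < τ ∧ τ < (1 + Real.sqrt 5) / 2) :
    (matM N m mt β τ).PosDef := by
  obtain ⟨hτ0, hτφ⟩ := hτ
  have hs : 0 < sTau τ := sTau_pos τ hτ0 hτφ
  have hmR : (0:ℝ) < m := Nat.cast_pos.mpr hm
  refine Matrix.PosDef.of_dotProduct_mulVec_pos ?_ ?_
  · show (matM N m mt β τ)ᴴ = matM N m mt β τ
    rw [Matrix.conjTranspose_eq_transpose_of_trivial]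
    simp [matM, matC_eq N m mt hm, Matrix.fromBlocks_transpose, Matrix.transpose_fromCols,
      Matrix.transpose_fromRows, Matrix.transpose_add, Matrix.transpose_smul,
      Matrix.transpose_mul, Matrix.transpose_transpose]
  · intro x hx
    rw [star_trivial]
    set x₁ : RowIdx N m mt → ℝ := fun i => x (Sum.inl i) with hx₁def
    set x₃ : RowIdx N m mt → ℝ := fun i => x (Sum.inr (Sum.inr i)) with hx₃def
    set u : Fin N × Fin m → ℝ := fun i => x (Sum.inr (Sum.inl (Sum.inl i))) with hudef
    set v : (Σ t : Fin N, Fin (mt t)) → ℝ := fun i => x (Sum.inr (Sum.inl (Sum.inr i)))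
      with hvdef
    have hxelim : x = Sum.elim x₁ (Sum.elim (Sum.elim u v) x₃) := by
      funext i; rcases i with i | (i | i); · rfl
      · rcases i with i | i <;> rfl
      · rfl
    have hq : x ⬝ᵥ matM N m mt β τ *ᵥ x
        = sTau τ * β *
            ((matA N m mt *ᵥ x₁ + matB N m mt *ᵥ Sum.elim u v) ⬝ᵥ
              (matA N m mt *ᵥ x₁ + matB N m mt *ᵥ Sum.elim u v))
          + β * (m:ℝ)⁻¹ *
            ((((matB₂ N m mt)ᵀ * matB₁ N m mt) *ᵥ u) ⬝ᵥ (((matB₂ N m mt)ᵀ * matB₁ N m mt) *ᵥ u))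
          + β * ((matB N m mt *ᵥ Sum.elim u v) ⬝ᵥ (matB N m mt *ᵥ Sum.elim u v))
          + (τ * β)⁻¹ * (x₃ ⬝ᵥ x₃) := by
      rw [hxelim, matM, matC_eq N m mt hm]
      simp only [Matrix.fromBlocks_mulVec, Sum.elim_comp_inl, Sum.elim_comp_inr,
        Matrix.fromCols_mulVec_sumElim, Matrix.fromRows_mulVec, Matrix.zero_mulVec,
        add_zero, zero_add, Matrix.add_mulVec, Matrix.smul_mulVec, Matrix.one_mulVec,
        sum_elim_add_sum_elim, sumElim_dotProduct_sumElim, dotProduct_add,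
        dotProduct_smul, smul_eq_mul, dot_gram, add_dotProduct,
        dotProduct_zero, zero_dotProduct]
      ring
    obtain ⟨a, hadef⟩ : ∃ y, matA N m mt *ᵥ x₁ = y := ⟨_, rfl⟩
    obtain ⟨b, hbdef⟩ : ∃ y, matB N m mt *ᵥ Sum.elim u v = y := ⟨_, rfl⟩
    obtain ⟨w, hwdef⟩ : ∃ y, ((matB₂ N m mt)ᵀ * matB₁ N m mt) *ᵥ u = y := ⟨_, rfl⟩
    rw [hadef, hbdef, hwdef] at hq
    rw [hq]
    by_contra hq0
    push_neg at hq0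
    have c1 : 0 < sTau τ * β := mul_pos hs hβ
    have c2 : 0 < (τ * β)⁻¹ := inv_pos.mpr (mul_pos hτ0 hβ)
    have c3 : 0 < β * (m:ℝ)⁻¹ := mul_pos hβ (inv_pos.mpr hmR)
    have n1 := dp_self_nonneg (a + b)
    have n2 := dp_self_nonneg w
    have n3 := dp_self_nonneg b
    have n4 := dp_self_nonneg x₃
    have m1 : 0 ≤ sTau τ * β * ((a + b) ⬝ᵥ (a + b)) := mul_nonneg c1.le n1
    have m2 : 0 ≤ β * (m:ℝ)⁻¹ * (w ⬝ᵥ w) := mul_nonneg c3.le n2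
    have m3 : 0 ≤ β * (b ⬝ᵥ b) := mul_nonneg hβ.le n3
    have m4 : 0 ≤ (τ * β)⁻¹ * (x₃ ⬝ᵥ x₃) := mul_nonneg c2.le n4
    have z1 : (a + b) ⬝ᵥ (a + b) = 0 :=
      factor_zero c1 n1 (by linarith)
    have z2 : w ⬝ᵥ w = 0 := factor_zero c3 n2 (by linarith)
    have z3 : b ⬝ᵥ b = 0 := factor_zero hβ n3 (by linarith)
    have z4 : x₃ ⬝ᵥ x₃ = 0 := factor_zero c2 n4 (by linarith)
    have hab : a + b = 0 := dotProduct_self_eq_zero.mp z1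
    have hw0 : w = 0 := dotProduct_self_eq_zero.mp z2
    have hb0 : b = 0 := dotProduct_self_eq_zero.mp z3
    have hx₃0 : x₃ = 0 := dotProduct_self_eq_zero.mp z4
    have ha0 : a = 0 := by rwa [hb0, add_zero] at hab
    have hx₁0 : x₁ = 0 := by
      have h1 := congrArg (fun z => (matA N m mt)ᵀ *ᵥ z) (hadef.trans ha0)
      simpa [Matrix.mulVec_mulVec, matA_gram N m mt, Matrix.one_mulVec,
        Matrix.mulVec_zero] using h1
    have hbsplit : matB₁ N m mt *ᵥ u + matB₂ N m mt *ᵥ v = 0 := by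
      have h0 := hbdef.trans hb0
      rwa [matB, Matrix.fromCols_mulVec_sumElim] at h0
    have hv0 : v = 0 := by
      have h1 := congrArg (fun z => (matB₂ N m mt)ᵀ *ᵥ z) hbsplit
      simp only [Matrix.mulVec_add, Matrix.mulVec_mulVec, Matrix.mulVec_zero] at h1
      rw [matB₂_gram N m mt, Matrix.smul_mulVec, Matrix.one_mulVec] at h1
      have h2 : (m:ℝ) • v = 0 := by
        rw [hwdef, hw0, zero_add] at h1; exact h1
      rcases smul_eq_zero.mp h2 with h | h
      · exact absurd h (ne_of_gt hmR)
      · exact h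
    have hu0 : u = 0 := by
      apply matB₁_inj N m mt hmt
      rwa [hv0, Matrix.mulVec_zero, add_zero] at hbsplit
    exact hx (by rw [hxelim, hx₁0, hu0, hv0, hx₃0]; funext i
                 rcases i with i | (i | i) <;> simp)
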